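/- Let E be a compact metric space, Ω = E^ℕ, p a fully supported Borel probability measure on E, f ∈ C(Ω), L_f the Ruelle operator, P(f) the pressure, and λ_f = exp(P(f)). Suppose there exists a Baire-class-one function ψ : Ω → ℝ (i.e., ψ is the pointwise limit of a sequence of continuous functions) and constants 0 < m ≤ M < ∞ with m ≤ ψ(x) ≤ M for all x ∈ Ω, such that ∫_E exp(f(a·x)) ψ(a·x) dp(a) = λ_f ψ(x) for every x ∈ Ω. Then the norm closure in C(Ω)* of the range of L_f* − λ_f·Id (i.e., of { g ∘ L_f − λ_f g : g ∈ C(Ω)* }) contains no functional of the form φ ↦ ∫_Ω φ dμ with μ a Borel probability measure on Ω. -/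

import Mathlib

open MeasureTheory Filter Topology NormedSpace

noncomputable section

/-- The sequence `(a, x₁, x₂, …)` obtained by prepending `a` to `x`. -/
def cons {E : Type*} (a : E) (x : ℕ → E) : ℕ → E := fun n => Nat.casesOn n a x

/-- A continuous function on a compact space is integrable for any finite measure. -/
lemma cont_int_aux {X : Type*} [TopologicalSpace X] [CompactSpace X] [MeasurableSpace X]
    [OpensMeasurableSpace X] (μ : Measure X) [IsFiniteMeasure μ] {g : X → ℝ}
    (hg : Continuous g) : Integrable g μ := by
  have h := hg.continuousOn.integrableOn_compact' isCompact_univ MeasurableSet.univ (μ := μ)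
  rwa [integrableOn_univ] at h

/-- A bounded measurable function is integrable for any finite measure. -/
lemma meas_int_aux {X : Type*} [MeasurableSpace X] (μ : Measure X) [IsFiniteMeasure μ] {g : X → ℝ}
    (hg : Measurable g) (C : ℝ) (hC : ∀ x, |g x| ≤ C) : Integrable g μ :=
  (integrable_const C).mono' hg.aestronglyMeasurable (Eventually.of_forall fun x => by
    simpa [Real.norm_eq_abs] using hC x)

/-- If there is a bounded Baire-class-one eigenfunction
`ψ` (with `0 < m ≤ ψ ≤ M`) of the Ruelle operator associated to `λ_f = exp(P(f))`, then the
norm closure of the range of `L_f* − λ_f·Id` contains no functional given by integration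
against a Borel probability measure on `Ω`. -/
theorem closure_range_misses_probabilities
    {E : Type*} [MetricSpace E] [CompactSpace E] [MeasurableSpace E] [BorelSpace E]
    (p : Measure E) [IsProbabilityMeasure p]
    (hp : ∀ U : Set E, IsOpen U → U.Nonempty → 0 < p U)
    (f : C(ℕ → E, ℝ))
    (T : C(ℕ → E, ℝ) →L[ℝ] C(ℕ → E, ℝ))
    (hT : ∀ (φ : C(ℕ → E, ℝ)) (x : ℕ → E),
      T φ x = ∫ a, Real.exp (f (cons a x)) * φ (cons a x) ∂p)
    (P : ℝ)
    (hP : TendstoUniformly (fun (n : ℕ) (x : ℕ → E) => Real.log ((T ^ n) 1 x) / n)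
      (fun _ => P) atTop)
    (ψ : (ℕ → E) → ℝ)
    (hBaire : ∃ u : ℕ → C(ℕ → E, ℝ), ∀ x, Tendsto (fun n => u n x) atTop (nhds (ψ x)))
    (m M : ℝ) (hm : 0 < m) (hmM : m ≤ M)
    (hbounds : ∀ x, m ≤ ψ x ∧ ψ x ≤ M)
    (heig : ∀ x : ℕ → E,
      ∫ a, Real.exp (f (cons a x)) * ψ (cons a x) ∂p = Real.exp P * ψ x) :
    ∀ μ : Measure (ℕ → E), IsProbabilityMeasure μ →
      ∀ Λ : StrongDual ℝ C(ℕ → E, ℝ), (∀ φ : C(ℕ → E, ℝ), Λ φ = ∫ x, φ x ∂μ) →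
        Λ ∉ closure {h : StrongDual ℝ C(ℕ → E, ℝ) |
          ∃ g : StrongDual ℝ C(ℕ → E, ℝ), h = g.comp T - Real.exp P • g} := by
  intro μ hμ Λ hΛ hmem
  -- the space is nonempty, since it carries a probability measure
  rcases isEmpty_or_nonempty (ℕ → E) with hE | hne
  · have h1 : μ Set.univ = 1 := hμ.measure_univ
    rw [show (Set.univ : Set (ℕ → E)) = ∅ from Set.eq_empty_of_isEmpty _] at h1
    simp at h1
  set lam := Real.exp P with hlam
  clear_value lam
  have hlampos : 0 < lam := hlam ▸ Real.exp_pos P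
  have hM : 0 < M := lt_of_lt_of_le hm hmM
  obtain ⟨u, hu⟩ := hBaire
  have hψmeas : Measurable ψ :=
    measurable_of_tendsto_metrizable (fun n => (u n).continuous.measurable)
      (tendsto_pi_nhds.mpr hu)
  have hψnn : ∀ y, 0 ≤ ψ y := fun y => le_trans hm.le (hbounds y).1
  have hconsC : ∀ x : ℕ → E, Continuous fun a : E => cons a x := by
    intro x
    apply continuous_pi
    intro n
    cases n with
    | zero => exact continuous_id
    | succ k => exact continuous_const
  -- key bounds on T^k 1 by induction, from the eigen-equation
  have key : ∀ k : ℕ, ∀ x, lam ^ k * (ψ x / M) ≤ (T ^ k) 1 x ∧ (T ^ k) 1 x ≤ lam ^ k * (ψ x / m) := by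
    intro k
    induction k with
    | zero =>
      intro x
      have h0 : (T ^ 0) (1 : C(ℕ → E, ℝ)) x = 1 := by rw [pow_zero]; rfl
      rw [h0, pow_zero, one_mul, one_mul]
      exact ⟨(div_le_one hM).mpr (hbounds x).2, (one_le_div hm).mpr (hbounds x).1⟩
    | succ k ih =>
      intro x
      have hTT : (T ^ (k+1)) (1 : C(ℕ → E, ℝ)) = T ((T ^ k) 1) := by rw [pow_succ']; rfl
      have hTsucc : (T ^ (k+1)) (1 : C(ℕ → E, ℝ)) x
          = ∫ a, Real.exp (f (cons a x)) * (T ^ k) 1 (cons a x) ∂p := by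
        rw [hTT]; exact hT _ x
      have hint1 : Integrable (fun a => Real.exp (f (cons a x)) * (T ^ k) 1 (cons a x)) p :=
        cont_int_aux p (((Real.continuous_exp.comp (f.continuous.comp (hconsC x))).mul
          (((T ^ k) 1).continuous.comp (hconsC x))))
      have hintψ : Integrable (fun a => Real.exp (f (cons a x)) * ψ (cons a x)) p := by
        have hmeas : Measurable (fun a : E => Real.exp (f (cons a x)) * ψ (cons a x)) :=
          (Real.measurable_exp.comp (f.continuous.measurable.comp (hconsC x).measurable)).mul
            (hψmeas.comp (hconsC x).measurable)
        apply meas_int_aux p hmeas (Real.exp ‖f‖ * M)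
        intro a
        have hf1 : f (cons a x) ≤ ‖f‖ := by
          have := f.norm_coe_le_norm (cons a x)
          rw [Real.norm_eq_abs] at this
          exact le_trans (le_abs_self _) this
        rw [abs_mul, abs_of_pos (Real.exp_pos _), abs_of_nonneg (hψnn _)]
        exact mul_le_mul (Real.exp_le_exp.mpr hf1) (hbounds _).2 (hψnn _) (Real.exp_pos _).le
      constructor
      · -- lower bound
        have heq : (fun a => Real.exp (f (cons a x)) * (lam ^ k * (ψ (cons a x) / M)))
            = fun a => (lam ^ k / M) * (Real.exp (f (cons a x)) * ψ (cons a x)) := by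
          funext a; ring
        have hI : ∫ a, Real.exp (f (cons a x)) * (lam ^ k * (ψ (cons a x) / M)) ∂p
            = lam ^ (k+1) * (ψ x / M) := by
          rw [heq, integral_const_mul, heig x]; ring
        have h1 : Integrable (fun a => Real.exp (f (cons a x)) * (lam ^ k * (ψ (cons a x) / M))) p := by
          rw [heq]; exact hintψ.const_mul _
        rw [hTsucc, ← hI]
        refine integral_mono h1 hint1 fun a => ?_
        exact mul_le_mul_of_nonneg_left (ih (cons a x)).1 (Real.exp_pos _).le
      · -- upper bound
        have heq : (fun a => Real.exp (f (cons a x)) * (lam ^ k * (ψ (cons a x) / m)))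
            = fun a => (lam ^ k / m) * (Real.exp (f (cons a x)) * ψ (cons a x)) := by
          funext a; ring
        have hI : ∫ a, Real.exp (f (cons a x)) * (lam ^ k * (ψ (cons a x) / m)) ∂p
            = lam ^ (k+1) * (ψ x / m) := by
          rw [heq, integral_const_mul, heig x]; ring
        have h1 : Integrable (fun a => Real.exp (f (cons a x)) * (lam ^ k * (ψ (cons a x) / m))) p := by
          rw [heq]; exact hintψ.const_mul _
        rw [hTsucc, ← hI]
        refine integral_mono hint1 h1 fun a => ?_
        exact mul_le_mul_of_nonneg_left (ih (cons a x)).2 (Real.exp_pos _).le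
  have lb : ∀ (k : ℕ) x, lam ^ k * (m / M) ≤ (T ^ k) 1 x := by
    intro k x
    refine le_trans ?_ (key k x).1
    exact mul_le_mul_of_nonneg_left (div_le_div_of_nonneg_right (hbounds x).1 hM.le)
      (pow_pos hlampos k).le
  have ub : ∀ (k : ℕ) x, (T ^ k) 1 x ≤ lam ^ k * (M / m) := by
    intro k x
    refine le_trans (key k x).2 ?_
    exact mul_le_mul_of_nonneg_left (div_le_div_of_nonneg_right (hbounds x).2 hm.le)
      (pow_pos hlampos k).le
  -- sup-norm bound on T^k 1
  have hnorm : ∀ k : ℕ, ‖(T ^ k) (1 : C(ℕ → E, ℝ))‖ ≤ lam ^ k * (M / m) := by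
    intro k
    refine (ContinuousMap.norm_le _ (by positivity)).mpr fun x => ?_
    rw [Real.norm_eq_abs, abs_of_nonneg]
    · exact ub k x
    · exact le_trans (by positivity) (lb k x)
  -- lower bound on Λ (T^k 1)
  have hc_lb : ∀ k : ℕ, lam ^ k * (m / M) ≤ Λ ((T ^ k) 1) := by
    intro k
    rw [hΛ]
    calc lam ^ k * (m / M) = ∫ _x, lam ^ k * (m / M) ∂μ := by
          simp [measure_univ]
      _ ≤ ∫ x, (T ^ k) 1 x ∂μ :=
          integral_mono (integrable_const _) (cont_int_aux μ ((T ^ k) 1).continuous)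
            (fun x => lb k x)
  -- approximate Λ from the range
  have hd0 : (0:ℝ) < m * m / (M * M) := by positivity
  obtain ⟨h, hhS, hdist⟩ := (Metric.mem_closure_iff (α := StrongDual ℝ C(ℕ → E, ℝ))).mp (by exact hmem) (m * m / (M * M)) hd0
  obtain ⟨g, rfl⟩ := hhS
  set d : ℝ := m / M - dist Λ (g.comp T - lam • g) * (M / m) with hdd
  clear_value d
  have hdpos : 0 < d := by
    have h1 : dist Λ (g.comp T - lam • g) * (M / m) < (m * m / (M * M)) * (M / m) :=
      mul_lt_mul_of_pos_right hdist (by positivity)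
    have h2 : (m * m / (M * M)) * (M / m) = m / M := by field_simp
    rw [h2] at h1
    rw [hdd]; linarith
  -- the recurrence
  have hrec : ∀ k : ℕ, lam * g ((T ^ k) 1) + lam ^ k * d ≤ g ((T ^ (k+1)) 1) := by
    intro k
    have hTT : (T ^ (k+1)) (1 : C(ℕ → E, ℝ)) = T ((T ^ k) 1) := by rw [pow_succ']; rfl
    have e1 : (Λ - (g.comp T - lam • g)) ((T ^ k) 1)
        = Λ ((T ^ k) 1) - (g ((T ^ (k+1)) 1) - lam * g ((T ^ k) 1)) := by
      rw [hTT]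
      simp [ContinuousLinearMap.sub_apply, ContinuousLinearMap.comp_apply,
        ContinuousLinearMap.smul_apply, smul_eq_mul]
    have e2 : |(Λ - (g.comp T - lam • g)) ((T ^ k) 1)|
        ≤ dist Λ (g.comp T - lam • g) * (lam ^ k * (M / m)) := by
      rw [show dist Λ (g.comp T - lam • g) = ‖Λ - (g.comp T - lam • g)‖ from by exact dist_eq_norm Λ _]
      refine le_trans ?_ (mul_le_mul_of_nonneg_left (hnorm k) (norm_nonneg (Λ - (g.comp T - lam • g))))
      rw [← Real.norm_eq_abs]
      exact (Λ - (g.comp T - lam • g)).le_opNorm _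
    have e3 := (abs_le.mp e2).2
    rw [e1] at e3
    have e4 := hc_lb k
    have hring : lam ^ k * d = lam ^ k * (m / M) - dist Λ (g.comp T - lam • g) * (lam ^ k * (M / m)) := by
      rw [hdd]; ring
    linarith [e3, e4, hring]
  -- iterate the recurrence
  have main : ∀ n : ℕ, lam ^ n * (g 1 + n * (d / lam)) ≤ g ((T ^ n) 1) := by
    intro n
    induction n with
    | zero =>
      have h0 : (T ^ 0) (1 : C(ℕ → E, ℝ)) = 1 := by rw [pow_zero]; rfl
      rw [h0]
      simp
    | succ n ih =>
      have h1 : lam * (lam ^ n * (g 1 + n * (d / lam))) ≤ lam * g ((T ^ n) 1) :=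
        mul_le_mul_of_nonneg_left ih hlampos.le
      have h2 : lam ^ (n+1) * (g 1 + (↑(n+1) : ℝ) * (d / lam))
          = lam * (lam ^ n * (g 1 + n * (d / lam))) + lam ^ n * d := by
        push_cast
        field_simp
        ring
      rw [h2]
      calc lam * (lam ^ n * (g 1 + ↑n * (d / lam))) + lam ^ n * d
          ≤ lam * g ((T ^ n) 1) + lam ^ n * d := by linarith [h1]
        _ ≤ g ((T ^ (n+1)) 1) := hrec n
  -- upper bound on g (T^n 1)
  have hup : ∀ n : ℕ, g ((T ^ n) 1) ≤ ‖g‖ * (lam ^ n * (M / m)) := by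
    intro n
    refine le_trans (le_abs_self _) ?_
    rw [← Real.norm_eq_abs]
    exact le_trans (g.le_opNorm _) (mul_le_mul_of_nonneg_left (hnorm n) (norm_nonneg g))
  have hg1 : -‖g‖ ≤ g 1 := by
    have h1 : ‖g 1‖ ≤ ‖g‖ * ‖(1 : C(ℕ → E, ℝ))‖ := g.le_opNorm 1
    rw [norm_one, mul_one, Real.norm_eq_abs] at h1
    linarith [(abs_le.mp h1).1]
  -- derive a contradiction for large n
  obtain ⟨n, hn⟩ := exists_nat_gt ((‖g‖ * (M / m) + ‖g‖) / (d / lam))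
  have hdl : 0 < d / lam := by positivity
  have h5 : ‖g‖ * (M / m) + ‖g‖ < n * (d / lam) := (div_lt_iff₀ hdl).mp hn
  have h6 : lam ^ n * (g 1 + n * (d / lam)) ≤ ‖g‖ * (lam ^ n * (M / m)) :=
    le_trans (main n) (hup n)
  have h7 : lam ^ n * (g 1 + n * (d / lam)) ≤ lam ^ n * (‖g‖ * (M / m)) := by
    calc lam ^ n * (g 1 + n * (d / lam)) ≤ ‖g‖ * (lam ^ n * (M / m)) := h6
      _ = lam ^ n * (‖g‖ * (M / m)) := by ring
  have h8 : g 1 + n * (d / lam) ≤ ‖g‖ * (M / m) :=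
    le_of_mul_le_mul_left h7 (pow_pos hlampos n)
  linarith
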